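/- Assume d(n) ≥ 1 for all n ∈ ℕ. Then for every n ≥ 1, t(n)/r(n) ≤ ∑_{j=1}^n k(j)/(k(j)+d(j)). -/

import Mathlib

/-- with d(n) ≥ 1 for all n, for every n ≥ 1 one has
t(n)/r(n) ≤ ∑_{j=1}^n k(j)/(k(j)+d(j)). -/
theorem stmt_3 (d k : ℕ → ℕ) (hd0 : d 0 = 1) (hk0 : k 0 = 0)
    (hd : ∀ n, 1 ≤ d n)
    (r t : ℕ → ℕ)
    (hr : ∀ n, r n = ∏ j ∈ Finset.range (n + 1), (d j + k j))
    (ht0 : t 0 = 0)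
    (ht : ∀ n, t (n + 1) = d (n + 1) * t n + k (n + 1) * (r n - t n)) :
    ∀ n : ℕ, 1 ≤ n →
      (t n : ℝ) / (r n : ℝ) ≤ ∑ j ∈ Finset.Icc 1 n, (k j : ℝ) / ((k j : ℝ) + (d j : ℝ)) := by
  have hrrec : ∀ n, r (n + 1) = r n * (d (n + 1) + k (n + 1)) := by
    intro n; rw [hr, hr, Finset.prod_range_succ]
  have hrpos : ∀ n, 0 < r n := by
    intro n; rw [hr]
    apply Finset.prod_pos
    intro j _
    have := hd j; omega
  have htr : ∀ n, t n ≤ r n := by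
    intro n; induction n with
    | zero => rw [ht0]; exact (hrpos 0).le
    | succ n ih =>
      rw [ht, hrrec]
      calc d (n+1) * t n + k (n+1) * (r n - t n)
          ≤ d (n+1) * r n + k (n+1) * r n :=
            Nat.add_le_add (Nat.mul_le_mul_left _ ih)
              (Nat.mul_le_mul_left _ (Nat.sub_le _ _))
        _ = r n * (d (n+1) + k (n+1)) := by ring
  have tkey : ∀ n, t (n + 1) ≤ (d (n + 1) + k (n + 1)) * t n + k (n + 1) * r n := by
    intro n
    rw [ht]
    have h1 : k (n+1) * (r n - t n) ≤ k (n+1) * r n :=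
      Nat.mul_le_mul_left _ (Nat.sub_le _ _)
    nlinarith [h1]
  have main : ∀ n : ℕ,
      (t n : ℝ) / (r n : ℝ) ≤ ∑ j ∈ Finset.Icc 1 n, (k j : ℝ) / ((k j : ℝ) + (d j : ℝ)) := by
    intro n
    induction n with
    | zero => simp [ht0]
    | succ n ih =>
      rw [Finset.sum_Icc_succ_top (by omega : 1 ≤ n + 1)]
      have hR : (0:ℝ) < (r n : ℝ) := by exact_mod_cast hrpos n
      have hL : (0:ℝ) < ((d (n+1) : ℝ) + (k (n+1) : ℝ)) := by
        have := hd (n+1); positivity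
      have hT : (t (n+1) : ℝ) ≤ ((d (n+1) : ℝ) + (k (n+1) : ℝ)) * t n + (k (n+1) : ℝ) * r n := by
        exact_mod_cast tkey n
      have hRrec : (r (n+1) : ℝ) = (r n : ℝ) * ((d (n+1) : ℝ) + (k (n+1) : ℝ)) := by
        exact_mod_cast hrrec n
      rw [hRrec]
      have step : (t (n+1) : ℝ) / ((r n : ℝ) * ((d (n+1) : ℝ) + (k (n+1) : ℝ)))
          ≤ (t n : ℝ) / (r n : ℝ) + (k (n+1) : ℝ) / ((k (n+1) : ℝ) + (d (n+1) : ℝ)) := by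
        rw [div_add_div _ _ (ne_of_gt hR) (by linarith : ((k (n+1) : ℝ) + (d (n+1) : ℝ)) ≠ 0),
          div_le_div_iff₀ (mul_pos hR hL) (mul_pos hR (by linarith))]
        nlinarith [hT, hR.le, hL.le, Nat.cast_nonneg (α := ℝ) (k (n+1)),
          Nat.cast_nonneg (α := ℝ) (t n)]
      calc (t (n+1) : ℝ) / ((r n : ℝ) * ((d (n+1) : ℝ) + (k (n+1) : ℝ)))
          ≤ (t n : ℝ) / (r n : ℝ) + (k (n+1) : ℝ) / ((k (n+1) : ℝ) + (d (n+1) : ℝ)) := step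
        _ ≤ _ := by push_cast; linarith [ih]
  exact fun n _ => main n
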